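/- Let X and Y be Hilbert spaces, C ⊆ X a nonempty closed convex set, ψ† ∈ C, and T, T_h : X → Y bounded linear operators with ‖T − T_h‖ ≤ η_h. Assume the variational source condition holds with constant β > 0 and a strictly increasing concave function φ : [0,∞) → [0,∞) with φ(0) = 0 which is moreover differentiable on (0,∞) with φ'(t) > 0. Let S^δ ∈ Y with ‖S^δ − Tψ†‖ ≤ δ, set t₀ := η_h² ‖ψ†‖² + δ² (assumed > 0), choose the regularization parameter α := η_h² + 1/(4 φ'(t₀)), and let ψ_reg ∈ C be a minimizer over C of ψ ↦ ‖T_h ψ − S^δ‖² + α‖ψ‖². Then there is a constant c > 0, independent of δ, η_h, S^δ and ψ_reg, such that β‖ψ_reg − ψ†‖² ≤ c · φ(η_h² ‖ψ†‖² + δ²). -/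

import Mathlib

open Filter Topology

/-- Tangent line lies above a concave function. -/
lemma concave_tangent_aux (φ : ℝ → ℝ) (hconc : ConcaveOn ℝ (Set.Ici 0) φ)
    {t₀ d : ℝ} (ht₀ : 0 < t₀) (hd : HasDerivAt φ d t₀)
    {s : ℝ} (hs : 0 ≤ s) : φ s ≤ φ t₀ + d * (s - t₀) := by
  have hconv : ConvexOn ℝ (Set.Ici 0) (-φ) := hconc.neg
  have hd' : HasDerivAt (-φ) (-d) t₀ := hd.neg
  rcases lt_trichotomy s t₀ with h | h | h
  · have := hconv.slope_le_of_hasDerivAt hs (le_of_lt ht₀) h hd'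
    rw [slope_def_field] at this
    have hpos : 0 < t₀ - s := by linarith
    rw [div_le_iff₀ hpos] at this
    simp only [Pi.neg_apply] at this
    nlinarith
  · simp [h]
  · have := hconv.le_slope_of_hasDerivAt (le_of_lt ht₀) hs h hd'
    rw [slope_def_field] at this
    have hpos : 0 < s - t₀ := by linarith
    rw [le_div_iff₀ hpos] at this
    simp only [Pi.neg_apply] at this
    nlinarith

set_option maxHeartbeats 1000000 in
/-- Convergence rate for the a-priori parameter choice
`α = η_h² + 1/(4 φ'(η_h²‖ψ†‖² + δ²))`:
the reconstruction error satisfies `β‖ψ_reg − ψ†‖² ≤ c · φ(η_h²‖ψ†‖² + δ²)` with a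
constant `c` independent of `δ`, `η_h`, `S^δ` and `ψ_reg`. -/
theorem stmt_1
    {X Y : Type*} [NormedAddCommGroup X] [InnerProductSpace ℝ X] [CompleteSpace X]
    [NormedAddCommGroup Y] [InnerProductSpace ℝ Y] [CompleteSpace Y]
    (C : Set X) (hC_ne : C.Nonempty) (hC_closed : IsClosed C) (hC_conv : Convex ℝ C)
    (ψdag : X) (hψdag : ψdag ∈ C)
    (T : X →L[ℝ] Y)
    (β : ℝ) (hβ : 0 < β)
    (φ : ℝ → ℝ) (hφ_mono : StrictMonoOn φ (Set.Ici 0))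
    (hφ_conc : ConcaveOn ℝ (Set.Ici 0) φ) (hφ0 : φ 0 = 0)
    (hφ_nonneg : ∀ t ≥ 0, 0 ≤ φ t)
    (φ' : ℝ → ℝ) (hφ_deriv : ∀ t > 0, HasDerivAt φ (φ' t) t)
    (hφ'_pos : ∀ t > 0, 0 < φ' t)
    (hvsc : ∀ ψ ∈ C, β * ‖ψ - ψdag‖ ^ 2 ≤ ‖ψ‖ ^ 2 - ‖ψdag‖ ^ 2 + φ (‖T (ψ - ψdag)‖ ^ 2)) :
    ∃ c > 0, ∀ (Th : X →L[ℝ] Y) (ηh δ : ℝ) (Sδ : Y) (ψreg : X),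
      ‖T - Th‖ ≤ ηh → ‖Sδ - T ψdag‖ ≤ δ →
      0 < ηh ^ 2 * ‖ψdag‖ ^ 2 + δ ^ 2 →
      ψreg ∈ C →
      (∀ ψ ∈ C,
        ‖Th ψreg - Sδ‖ ^ 2 +
            (ηh ^ 2 + 1 / (4 * φ' (ηh ^ 2 * ‖ψdag‖ ^ 2 + δ ^ 2))) * ‖ψreg‖ ^ 2 ≤
          ‖Th ψ - Sδ‖ ^ 2 +
            (ηh ^ 2 + 1 / (4 * φ' (ηh ^ 2 * ‖ψdag‖ ^ 2 + δ ^ 2))) * ‖ψ‖ ^ 2) →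
      β * ‖ψreg - ψdag‖ ^ 2 ≤ c * φ (ηh ^ 2 * ‖ψdag‖ ^ 2 + δ ^ 2) := by
  refine ⟨14, by norm_num, ?_⟩
  intro Th ηh δ Sδ ψreg hT hS ht₀pos hreg hmin
  set t₀ : ℝ := ηh ^ 2 * ‖ψdag‖ ^ 2 + δ ^ 2 with ht₀def
  have hd := hφ_deriv t₀ ht₀pos
  have hdpos := hφ'_pos t₀ ht₀pos
  set d : ℝ := φ' t₀ with hddef
  set a : ℝ := 1 / (4 * d) with hadef
  have hapos : 0 < a := by positivity
  have hda : d * a = 1 / 4 := by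
    rw [hadef]; field_simp
  have hη : 0 ≤ ηh := le_trans (norm_nonneg _) hT
  have hδ : 0 ≤ δ := le_trans (norm_nonneg _) hS
  -- abbreviations
  set P : ℝ := ‖ψreg‖ ^ 2 with hPdef
  set Q : ℝ := ‖ψdag‖ ^ 2 with hQdef
  set R : ℝ := ‖Th ψreg - Sδ‖ ^ 2 with hRdef
  set E : ℝ := ‖T (ψreg - ψdag)‖ ^ 2 with hEdef
  have hP : 0 ≤ P := sq_nonneg _
  have hQ : 0 ≤ Q := sq_nonneg _
  have hR : 0 ≤ R := sq_nonneg _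
  -- bound on ‖Th ψdag - Sδ‖
  have hHnorm : ‖Th ψdag - Sδ‖ ≤ ηh * ‖ψdag‖ + δ := by
    have h1 : Th ψdag - Sδ = (Th - T) ψdag + (T ψdag - Sδ) := by
      simp only [ContinuousLinearMap.sub_apply]; abel
    have h2 : ‖(Th - T) ψdag‖ ≤ ηh * ‖ψdag‖ := by
      calc ‖(Th - T) ψdag‖ ≤ ‖Th - T‖ * ‖ψdag‖ := (Th - T).le_opNorm _
        _ ≤ ηh * ‖ψdag‖ := by
            apply mul_le_mul_of_nonneg_right _ (norm_nonneg _)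
            rw [norm_sub_rev]; exact hT
    have h3 : ‖T ψdag - Sδ‖ ≤ δ := by rw [norm_sub_rev]; exact hS
    calc ‖Th ψdag - Sδ‖ ≤ ‖(Th - T) ψdag‖ + ‖T ψdag - Sδ‖ := by
          rw [h1]; exact norm_add_le _ _
      _ ≤ ηh * ‖ψdag‖ + δ := add_le_add h2 h3
  have hH : ‖Th ψdag - Sδ‖ ^ 2 ≤ 2 * t₀ := by
    have h2 : ‖Th ψdag - Sδ‖ ^ 2 ≤ (ηh * ‖ψdag‖ + δ) ^ 2 := by
      apply sq_le_sq' _ hHnorm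
      nlinarith [norm_nonneg (Th ψdag - Sδ), norm_nonneg ψdag]
    nlinarith [sq_nonneg (ηh * ‖ψdag‖ - δ)]
  -- minimality at ψdag
  have hminψ : R + (ηh ^ 2 + a) * P ≤ 2 * t₀ + (ηh ^ 2 + a) * Q := by
    have h := hmin ψdag hψdag
    have : R + (ηh ^ 2 + a) * P ≤ ‖Th ψdag - Sδ‖ ^ 2 + (ηh ^ 2 + a) * Q := h
    linarith
  -- bound ‖T (ψreg - ψdag)‖
  have hTe : ‖T (ψreg - ψdag)‖ ≤ ηh * ‖ψreg‖ + ‖Th ψreg - Sδ‖ + δ := by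
    have h1 : T (ψreg - ψdag) = (T - Th) ψreg + (Th ψreg - Sδ) + (Sδ - T ψdag) := by
      simp only [ContinuousLinearMap.sub_apply, map_sub]; abel
    have h2 : ‖(T - Th) ψreg‖ ≤ ηh * ‖ψreg‖ := by
      calc ‖(T - Th) ψreg‖ ≤ ‖T - Th‖ * ‖ψreg‖ := (T - Th).le_opNorm _
        _ ≤ ηh * ‖ψreg‖ := mul_le_mul_of_nonneg_right hT (norm_nonneg _)
    calc ‖T (ψreg - ψdag)‖
        ≤ ‖(T - Th) ψreg + (Th ψreg - Sδ)‖ + ‖Sδ - T ψdag‖ := by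
          rw [h1]; exact norm_add_le _ _
      _ ≤ ‖(T - Th) ψreg‖ + ‖Th ψreg - Sδ‖ + ‖Sδ - T ψdag‖ :=
          add_le_add_left (norm_add_le _ _) _
      _ ≤ ηh * ‖ψreg‖ + ‖Th ψreg - Sδ‖ + δ := by
          exact add_le_add (add_le_add_left h2 _) hS
  have hTe2 : E ≤ 3 * (ηh ^ 2 * P + R + δ ^ 2) := by
    have h2 : ‖T (ψreg - ψdag)‖ ^ 2 ≤ (ηh * ‖ψreg‖ + ‖Th ψreg - Sδ‖ + δ) ^ 2 := by
      apply sq_le_sq' _ hTe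
      nlinarith [norm_nonneg (T (ψreg - ψdag)), norm_nonneg ψreg,
        norm_nonneg (Th ψreg - Sδ), mul_nonneg hη (norm_nonneg ψreg)]
    have h3 : (ηh * ‖ψreg‖ + ‖Th ψreg - Sδ‖ + δ) ^ 2 ≤ 3 * (ηh ^ 2 * P + R + δ ^ 2) := by
      rw [hPdef, hRdef]
      nlinarith [sq_nonneg (ηh * ‖ψreg‖ - ‖Th ψreg - Sδ‖),
        sq_nonneg (ηh * ‖ψreg‖ - δ), sq_nonneg (‖Th ψreg - Sδ‖ - δ)]
    calc E = ‖T (ψreg - ψdag)‖ ^ 2 := hEdef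
      _ ≤ _ := le_trans h2 h3
  -- tangent line inequalities
  have htan : φ E ≤ φ t₀ + d * (E - t₀) :=
    concave_tangent_aux φ hφ_conc ht₀pos hd (sq_nonneg _)
  have htan0 : d * t₀ ≤ φ t₀ := by
    have := concave_tangent_aux φ hφ_conc ht₀pos hd (le_refl (0 : ℝ))
    rw [hφ0] at this
    nlinarith
  -- variational source condition at ψreg
  have hv' : β * ‖ψreg - ψdag‖ ^ 2 ≤ P - Q + φ t₀ + d * E - d * t₀ := by
    have hv := hvsc ψreg hreg
    have hexp : d * (E - t₀) = d * E - d * t₀ := by ring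
    have : β * ‖ψreg - ψdag‖ ^ 2 ≤ P - Q + φ E := hv
    linarith
  -- auxiliary bounds
  have hδt : δ ^ 2 ≤ t₀ := by rw [ht₀def]; nlinarith
  have hQt : ηh ^ 2 * Q ≤ t₀ := by rw [ht₀def, hQdef]; nlinarith
  have haPQ : a * (P - Q) ≤ 2 * t₀ := by
    rcases le_or_gt P Q with h | h
    · nlinarith
    · nlinarith [mul_nonneg (sq_nonneg ηh) (le_of_lt (sub_pos.mpr h))]
  clear_value t₀ d a P Q R E
  -- combine
  have h2 : ηh ^ 2 * P + R ≤ 3 * t₀ + a * (Q - P) := by nlinarith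
  have hdE : d * E ≤ 12 * (d * t₀) + 3 / 4 * (Q - P) := by
    have h1 : d * E ≤ d * (3 * (ηh ^ 2 * P + R + δ ^ 2)) :=
      mul_le_mul_of_nonneg_left hTe2 (le_of_lt hdpos)
    have h3 : d * (ηh ^ 2 * P + R) ≤ 3 * (d * t₀) + d * (a * (Q - P)) := by
      have := mul_le_mul_of_nonneg_left h2 (le_of_lt hdpos)
      nlinarith
    have h5 : d * (a * (Q - P)) = 1 / 4 * (Q - P) := by
      rw [← mul_assoc, hda]
    have h6 : d * δ ^ 2 ≤ d * t₀ := mul_le_mul_of_nonneg_left hδt (le_of_lt hdpos)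
    have h1' : d * E ≤ 3 * (d * (ηh ^ 2 * P + R)) + 3 * (d * δ ^ 2) := by
      have hring : d * (3 * (ηh ^ 2 * P + R + δ ^ 2))
          = 3 * (d * (ηh ^ 2 * P + R)) + 3 * (d * δ ^ 2) := by ring
      linarith
    linarith
  have h4 : 1 / 4 * (P - Q) ≤ 2 * (d * t₀) := by
    have := mul_le_mul_of_nonneg_left haPQ (le_of_lt hdpos)
    have h5 : d * (a * (P - Q)) = 1 / 4 * (P - Q) := by rw [← mul_assoc, hda]
    nlinarith
  have hkey : β * ‖ψreg - ψdag‖ ^ 2 ≤ φ t₀ + 13 * (d * t₀) := by linarith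
  calc β * ‖ψreg - ψdag‖ ^ 2 ≤ φ t₀ + 13 * (d * t₀) := hkey
    _ ≤ φ t₀ + 13 * φ t₀ := by linarith
    _ = 14 * φ t₀ := by ring
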